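/- If a discrete sequence Λ in the unit disk 𝔻 is weakly separated, then X^0(Λ) = X^n(Λ) for all n ≥ 0. -/

import Mathlib

open Complex Set

noncomputable section

/-- The open unit disk `𝔻` in the complex plane. -/
def unitDisk : Set ℂ := {z : ℂ | ‖z‖ < 1}

/-- The Laplacian of `H : ℂ → ℝ`, as the sum of the second directional
derivatives in the directions `1` and `I`. -/
def laplacian (H : ℂ → ℝ) (z : ℂ) : ℝ :=
  fderiv ℝ (fun w => fderiv ℝ H w 1) z 1 +
    fderiv ℝ (fun w => fderiv ℝ H w Complex.I) z Complex.I

/-- `H` is harmonic on the unit disk: twice continuously differentiable with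
vanishing Laplacian. -/
def HarmonicOnDisk (H : ℂ → ℝ) : Prop :=
  ContDiffOn ℝ 2 H unitDisk ∧ ∀ z ∈ unitDisk, laplacian H z = 0

/-- `H ∈ Har₊(𝔻)`: a non-negative harmonic function on the unit disk. -/
def HarPos (H : ℂ → ℝ) : Prop :=
  HarmonicOnDisk H ∧ ∀ z ∈ unitDisk, 0 ≤ H z

/-- The pseudohyperbolic distance `ρ(z,w) = |z-w| / |1 - conj z * w|`. -/
def pDist (z w : ℂ) : ℝ := ‖(z - w) / (1 - (starRingEnd ℂ) z * w)‖

/-- The pseudohyperbolic disk `D(z,r) = {w ∈ 𝔻 : ρ(z,w) < r}`. -/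
def pDisk (z : ℂ) (r : ℝ) : Set ℂ := {w ∈ unitDisk | pDist z w < r}

/-- The Blaschke factor `b_a(z) = (z - a)/(1 - conj a * z)`. -/
def blaschke (a z : ℂ) : ℂ := (z - a) / (1 - (starRingEnd ℂ) a * z)

/-- A discrete sequence in `𝔻`: a set of (pairwise distinct) points of the unit
disk with no accumulation point inside the disk. -/
def DiscreteSeq (Λ : Set ℂ) : Prop :=
  Λ ⊆ unitDisk ∧ ∀ z ∈ unitDisk, ¬ AccPt z (Filter.principal Λ)

/-- The Nevanlinna class `N`: holomorphic functions on `𝔻` such that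
`log⁺ |f|` admits a majorant in `Har₊(𝔻)`. -/
def Nevanlinna (f : ℂ → ℂ) : Prop :=
  DifferentiableOn ℂ f unitDisk ∧
    ∃ H : ℂ → ℝ, HarPos H ∧ ∀ z ∈ unitDisk, Real.log (max ‖f z‖ 1) ≤ H z

/-- `Λ ∈ Int N`: for every bounded family of values on `Λ` there is a function
in the Nevanlinna class interpolating it. -/
def IntN (Λ : Set ℂ) : Prop :=
  ∀ v : ℂ → ℂ, (∃ C : ℝ, ∀ lam ∈ Λ, ‖v lam‖ ≤ C) →
    ∃ f : ℂ → ℂ, Nevanlinna f ∧ ∀ lam ∈ Λ, f lam = v lam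

/-- Pseudohyperbolic divided differences:
`divDiff j ω z = Δʲω(z 0, …, z j)`. -/
def divDiff : (j : ℕ) → (ℂ → ℂ) → (Fin (j + 1) → ℂ) → ℂ
  | 0, ω, z => ω (z 0)
  | j + 1, ω, z =>
      (divDiff j ω (fun i => z i.succ) - divDiff j ω (fun i => z i.castSucc)) /
        blaschke (z 0) (z (Fin.last (j + 1)))

/-- `ω ∈ X^m(Λ)`: the divided differences of order `m` (on tuples of `m+1`
pairwise distinct points of `Λ`) are uniformly controlled by a positive
harmonic function. -/
def MemX (m : ℕ) (Λ : Set ℂ) (ω : ℂ → ℂ) : Prop :=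
  ∃ H : ℂ → ℝ, HarPos H ∧ ∃ C : ℝ,
    ∀ z : Fin (m + 1) → ℂ, (∀ i, z i ∈ Λ) → Function.Injective z →
      ‖divDiff m ω z‖ * Real.exp (-(∑ i, H (z i))) ≤ C

/-- `Λ` is weakly separated: for some `H ∈ Har₊(𝔻)` the pseudohyperbolic disks
`D(λ, e^{-H(λ)})`, `λ ∈ Λ`, are pairwise disjoint. -/
def WeaklySep (Λ : Set ℂ) : Prop :=
  ∃ H : ℂ → ℝ, HarPos H ∧ ∀ lam ∈ Λ, ∀ mu ∈ Λ, lam ≠ mu →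
    Disjoint (pDisk lam (Real.exp (-H lam))) (pDisk mu (Real.exp (-H mu)))

lemma isOpen_unitDisk : IsOpen unitDisk :=
  isOpen_lt continuous_norm continuous_const

lemma harPos_zero : HarPos (fun _ => (0:ℝ)) := by
  refine ⟨⟨contDiffOn_const, fun z _ => ?_⟩, fun z _ => le_rfl⟩
  simp [laplacian]

lemma mul_exp_neg_le_iff {x C s : ℝ} : x * Real.exp (-s) ≤ C ↔ x ≤ C * Real.exp s := by
  rw [Real.exp_neg, ← div_eq_mul_inv, div_le_iff₀ (Real.exp_pos s)]

lemma harPos_add {H G : ℂ → ℝ} (hH : HarPos H) (hG : HarPos G) :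
    HarPos (fun z => H z + G z) := by
  obtain ⟨⟨hH2, hHl⟩, hHpos⟩ := hH
  obtain ⟨⟨hG2, hGl⟩, hGpos⟩ := hG
  refine ⟨⟨hH2.add hG2, ?_⟩, fun z hz => add_nonneg (hHpos z hz) (hGpos z hz)⟩
  intro z hz
  have hmem : unitDisk ∈ nhds z := isOpen_unitDisk.mem_nhds hz
  have hHa : ContDiffAt ℝ 2 H z := hH2.contDiffAt hmem
  have hGa : ContDiffAt ℝ 2 G z := hG2.contDiffAt hmem
  have key : ∀ v : ℂ, fderiv ℝ (fun w => fderiv ℝ (fun x => H x + G x) w v) z v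
      = fderiv ℝ (fun w => fderiv ℝ H w v) z v + fderiv ℝ (fun w => fderiv ℝ G w v) z v := by
    intro v
    have hev : (fun w => fderiv ℝ (fun x => H x + G x) w v)
        =ᶠ[nhds z] (fun w => fderiv ℝ H w v + fderiv ℝ G w v) := by
      filter_upwards [hmem] with w hw
      have h1 : DifferentiableAt ℝ H w :=
        (hH2.contDiffAt (isOpen_unitDisk.mem_nhds hw)).differentiableAt two_ne_zero
      have h2 : DifferentiableAt ℝ G w :=
        (hG2.contDiffAt (isOpen_unitDisk.mem_nhds hw)).differentiableAt two_ne_zero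
      rw [fderiv_fun_add h1 h2]
      simp
    have hdH : DifferentiableAt ℝ (fun w => fderiv ℝ H w v) z := by
      have h1 : ContDiffAt ℝ 1 (fderiv ℝ H) z := hHa.fderiv_right (by norm_num)
      exact (h1.differentiableAt one_ne_zero).clm_apply (differentiableAt_const v)
    have hdG : DifferentiableAt ℝ (fun w => fderiv ℝ G w v) z := by
      have h1 : ContDiffAt ℝ 1 (fderiv ℝ G) z := hGa.fderiv_right (by norm_num)
      exact (h1.differentiableAt one_ne_zero).clm_apply (differentiableAt_const v)
    rw [hev.fderiv_eq, fderiv_fun_add hdH hdG]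
    simp
  have l1 := hHl z hz
  have l2 := hGl z hz
  unfold laplacian at l1 l2 ⊢
  rw [key 1, key Complex.I]
  linarith
lemma abs_sub_le_abs_one_sub {a z : ℂ} (ha : ‖a‖ < 1) (hz : ‖z‖ < 1) :
    ‖z - a‖ ≤ ‖1 - (starRingEnd ℂ) a * z‖ := by
  have ha' : Complex.normSq a < 1 := by
    rw [← Complex.sq_norm]; nlinarith [norm_nonneg a]
  have hz' : Complex.normSq z < 1 := by
    rw [← Complex.sq_norm]; nlinarith [norm_nonneg z]
  have h : Complex.normSq (z - a) ≤ Complex.normSq (1 - (starRingEnd ℂ) a * z) := by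
    simp only [Complex.normSq_apply, Complex.sub_re, Complex.sub_im, Complex.mul_re,
      Complex.mul_im, Complex.conj_re, Complex.conj_im, Complex.one_re, Complex.one_im] at *
    nlinarith [mul_nonneg (sub_nonneg.2 ha'.le) (sub_nonneg.2 hz'.le)]
  rw [Complex.norm_def, Complex.norm_def]
  exact Real.sqrt_le_sqrt h

lemma abs_blaschke_le_one {a z : ℂ} (ha : ‖a‖ < 1) (hz : ‖z‖ < 1) :
    ‖blaschke a z‖ ≤ 1 := by
  rw [blaschke, norm_div]
  exact div_le_one_of_le₀ (abs_sub_le_abs_one_sub ha hz) (norm_nonneg _)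

lemma blaschke_ne_zero {a z : ℂ} (ha : ‖a‖ < 1) (hz : ‖z‖ < 1)
    (hne : a ≠ z) : blaschke a z ≠ 0 := by
  apply div_ne_zero (sub_ne_zero.2 (fun h => hne (h.symm)))
  intro h
  have h1 : (starRingEnd ℂ) a * z = 1 := by
    have := sub_eq_zero.1 h; linear_combination -this
  have h2 : ‖(starRingEnd ℂ) a * z‖ = 1 := by rw [h1]; simp
  rw [norm_mul, Complex.norm_conj] at h2
  nlinarith [norm_nonneg a, norm_nonneg z]

lemma abs_blaschke_eq_pDist (a z : ℂ) : ‖blaschke a z‖ = pDist a z := by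
  rw [blaschke, pDist, norm_div, norm_div, norm_sub_rev]

lemma pDist_self (z : ℂ) : pDist z z = 0 := by simp [pDist]

lemma pdist_lower {Λ : Set ℂ} {Hs : ℂ → ℝ} (hΛ : Λ ⊆ unitDisk)
    (hdisj : ∀ lam ∈ Λ, ∀ mu ∈ Λ, lam ≠ mu →
      Disjoint (pDisk lam (Real.exp (-Hs lam))) (pDisk mu (Real.exp (-Hs mu))))
    {lam mu : ℂ} (hlam : lam ∈ Λ) (hmu : mu ∈ Λ) (hne : lam ≠ mu) :
    Real.exp (-Hs lam) ≤ pDist lam mu := by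
  by_contra hlt
  push_neg at hlt
  have h1 : mu ∈ pDisk lam (Real.exp (-Hs lam)) := ⟨hΛ hmu, hlt⟩
  have h2 : mu ∈ pDisk mu (Real.exp (-Hs mu)) := by
    refine ⟨hΛ hmu, ?_⟩
    rw [pDist_self]
    exact Real.exp_pos _
  exact Set.disjoint_left.1 (hdisj lam hlam mu hmu hne) h1 h2

lemma sum_tuple_le {r : ℕ} {w : Fin r → ℂ} (hw : Function.Injective w)
    {P : Finset ℂ} (hP : ∀ i, w i ∈ P) {H : ℂ → ℝ} (hH : ∀ x ∈ P, 0 ≤ H x) :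
    ∑ i, H (w i) ≤ ∑ x ∈ P, H x := by
  have : ∑ i, H (w i) = ∑ x ∈ Finset.univ.image w, H x :=
    (Finset.sum_image (fun x _ y _ h => hw h)).symm
  rw [this]
  refine Finset.sum_le_sum_of_subset_of_nonneg ?_ (fun x hx _ => hH x hx)
  intro x hx
  obtain ⟨i, _, rfl⟩ := Finset.mem_image.1 hx
  exact hP i
lemma memX_of_finite {Λ : Set ℂ} {ω : ℂ → ℂ} (hfin : Λ.Finite) (k : ℕ) : MemX k Λ ω := by
  have hfin2 : (Set.univ.pi fun _ : Fin (k+1) => Λ).Finite := Set.Finite.pi fun _ => hfin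
  have himg : ((fun z : Fin (k+1) → ℂ => ‖divDiff k ω z‖) ''
      (Set.univ.pi fun _ => Λ)).Finite := hfin2.image _
  obtain ⟨C, hC⟩ := himg.bddAbove
  refine ⟨fun _ => 0, harPos_zero, C, fun z hzΛ _ => ?_⟩
  have h1 : ‖divDiff k ω z‖ ≤ C :=
    hC (Set.mem_image_of_mem _ (fun i _ => hzΛ i))
  simpa using h1

lemma divDiff_step {ω : ℂ → ℂ} {m : ℕ} {v : Fin (m+1) → ℂ} {ξ : ℂ}
    (hv : ∀ i, ‖v i‖ < 1) (hξ : ‖ξ‖ < 1)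
    (hne : ξ ≠ v (Fin.last m)) :
    ‖divDiff m ω v‖ ≤
      ‖divDiff (m+1) ω (Fin.cons ξ v)‖ +
        ‖divDiff m ω (Fin.cons ξ (v ∘ Fin.castSucc))‖ := by
  have hsucc : (fun i : Fin (m+1) => (Fin.cons ξ v : Fin (m+2) → ℂ) i.succ) = v := by
    funext i; simp
  have hcast : (fun i : Fin (m+1) => (Fin.cons ξ v : Fin (m+2) → ℂ) i.castSucc)
      = Fin.cons ξ (v ∘ Fin.castSucc) := by
    funext i
    refine Fin.cases ?_ (fun j => ?_) i
    · simp
    · have h1 : (Fin.succ j).castSucc = Fin.succ j.castSucc := rfl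
      rw [h1, Fin.cons_succ, Fin.cons_succ]
      rfl
  have hlast : (Fin.cons ξ v : Fin (m+2) → ℂ) (Fin.last (m+1)) = v (Fin.last m) := by
    rw [← Fin.succ_last, Fin.cons_succ]
  have heq : divDiff (m+1) ω (Fin.cons ξ v)
      = (divDiff m ω v - divDiff m ω (Fin.cons ξ (v ∘ Fin.castSucc)))
          / blaschke ξ (v (Fin.last m)) := by
    show (divDiff m ω _ - divDiff m ω _) / blaschke ((Fin.cons ξ v : Fin (m+2) → ℂ) 0) ((Fin.cons ξ v : Fin (m+2) → ℂ) (Fin.last (m+1))) = _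
    rw [hsucc, hcast, hlast, Fin.cons_zero]
  have hb : blaschke ξ (v (Fin.last m)) ≠ 0 := blaschke_ne_zero hξ (hv _) hne
  have key : divDiff m ω v - divDiff m ω (Fin.cons ξ (v ∘ Fin.castSucc))
      = divDiff (m+1) ω (Fin.cons ξ v) * blaschke ξ (v (Fin.last m)) := by
    rw [heq, div_mul_cancel₀ _ hb]
  have h1 : ‖divDiff m ω v‖ ≤
      ‖divDiff m ω v - divDiff m ω (Fin.cons ξ (v ∘ Fin.castSucc))‖
        + ‖divDiff m ω (Fin.cons ξ (v ∘ Fin.castSucc))‖ := by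
    calc ‖divDiff m ω v‖
        = ‖(divDiff m ω v - divDiff m ω (Fin.cons ξ (v ∘ Fin.castSucc)))
            + divDiff m ω (Fin.cons ξ (v ∘ Fin.castSucc))‖ := by ring_nf
      _ ≤ _ := norm_add_le _ _
  refine h1.trans (add_le_add_left ?_ _)
  rw [key, norm_mul]
  calc ‖divDiff (m+1) ω (Fin.cons ξ v)‖ * ‖blaschke ξ (v (Fin.last m))‖
      ≤ ‖divDiff (m+1) ω (Fin.cons ξ v)‖ * 1 :=
        mul_le_mul_of_nonneg_left (abs_blaschke_le_one hξ (hv _)) (norm_nonneg _)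
    _ = _ := mul_one _
lemma memX_succ_of_memX {Λ : Set ℂ} {ω : ℂ → ℂ} (hΛ : Λ ⊆ unitDisk)
    (hsep : WeaklySep Λ) {m : ℕ} (h : MemX m Λ ω) : MemX (m+1) Λ ω := by
  obtain ⟨H, hH, C, hC⟩ := h
  obtain ⟨Hs, hHs, hdisj⟩ := hsep
  refine ⟨fun z => H z + Hs z, harPos_add hH hHs, 2 * C, ?_⟩
  intro w hwΛ hwinj
  rw [mul_exp_neg_le_iff]
  have hwd : ∀ i, ‖w i‖ < 1 := fun i => hΛ (hwΛ i)
  have h0l : w 0 ≠ w (Fin.last (m+1)) := by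
    intro hcontra
    have h2 := congrArg Fin.val (hwinj hcontra)
    simp [Fin.val_last] at h2
  -- divided difference tuples
  have hA := hC (fun i => w i.succ) (fun i => hwΛ _) (hwinj.comp (Fin.succ_injective _))
  have hB := hC (fun i => w i.castSucc) (fun i => hwΛ _) (hwinj.comp (Fin.castSucc_injective _))
  rw [mul_exp_neg_le_iff] at hA hB
  have hC0 : 0 ≤ C := le_trans (by positivity)
    (hC (fun i => w i.succ) (fun i => hwΛ _) (hwinj.comp (Fin.succ_injective _)))
  -- nonneg of H and Hs on points
  have hHpos : ∀ i, 0 ≤ H (w i) := fun i => hH.2 _ (hΛ (hwΛ i))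
  have hHspos : ∀ i, 0 ≤ Hs (w i) := fun i => hHs.2 _ (hΛ (hwΛ i))
  set S : ℝ := ∑ i : Fin (m+2), H (w i) with hS
  have hsum1 : ∑ i : Fin (m+1), H (w i.succ) ≤ S := by
    rw [hS]
    conv_rhs => rw [Fin.sum_univ_succ]
    have := hHpos 0
    linarith
  have hsum2 : ∑ i : Fin (m+1), H (w i.castSucc) ≤ S := by
    rw [hS]
    conv_rhs => rw [Fin.sum_univ_castSucc]
    have := hHpos (Fin.last (m+1))
    linarith
  have hA' : ‖divDiff m ω (fun i => w i.succ)‖ ≤ C * Real.exp S :=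
    hA.trans (mul_le_mul_of_nonneg_left (Real.exp_le_exp.2 hsum1) hC0)
  have hB' : ‖divDiff m ω (fun i => w i.castSucc)‖ ≤ C * Real.exp S :=
    hB.trans (mul_le_mul_of_nonneg_left (Real.exp_le_exp.2 hsum2) hC0)
  -- blaschke lower bound
  have hblow : Real.exp (-Hs (w 0)) ≤ ‖blaschke (w 0) (w (Fin.last (m+1)))‖ := by
    rw [abs_blaschke_eq_pDist]
    exact pdist_lower hΛ hdisj (hwΛ 0) (hwΛ _) h0l
  have hbpos : 0 < ‖blaschke (w 0) (w (Fin.last (m+1)))‖ :=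
    lt_of_lt_of_le (Real.exp_pos _) hblow
  have heq : divDiff (m+1) ω w
      = (divDiff m ω (fun i => w i.succ) - divDiff m ω (fun i => w i.castSucc))
          / blaschke (w 0) (w (Fin.last (m+1))) := rfl
  rw [heq, norm_div]
  have hnum : ‖divDiff m ω (fun i => w i.succ) - divDiff m ω (fun i => w i.castSucc)‖
      ≤ 2 * C * Real.exp S := by
    calc ‖divDiff m ω (fun i => w i.succ) - divDiff m ω (fun i => w i.castSucc)‖
        ≤ ‖divDiff m ω (fun i => w i.succ)‖
            + ‖divDiff m ω (fun i => w i.castSucc)‖ := by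
          rw [sub_eq_add_neg]
          refine (norm_add_le _ _).trans ?_
          rw [norm_neg]
      _ ≤ C * Real.exp S + C * Real.exp S := add_le_add hA' hB'
      _ = 2 * C * Real.exp S := by ring
  calc ‖divDiff m ω (fun i => w i.succ) - divDiff m ω (fun i => w i.castSucc)‖
        / ‖blaschke (w 0) (w (Fin.last (m+1)))‖
      ≤ (2 * C * Real.exp S) / Real.exp (-Hs (w 0)) := by
        apply div_le_div₀ (by positivity) hnum (Real.exp_pos _) hblow
    _ = 2 * C * Real.exp S * Real.exp (Hs (w 0)) := by
        rw [Real.exp_neg, div_eq_mul_inv, inv_inv]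
    _ = 2 * C * Real.exp (S + Hs (w 0)) := by rw [Real.exp_add]; ring
    _ ≤ 2 * C * Real.exp (∑ i : Fin (m+2), (H (w i) + Hs (w i))) := by
        apply mul_le_mul_of_nonneg_left (Real.exp_le_exp.2 ?_) (by positivity)
        rw [Finset.sum_add_distrib]
        have : Hs (w 0) ≤ ∑ i : Fin (m+2), Hs (w i) := by
          rw [Fin.sum_univ_succ]
          have : 0 ≤ ∑ i : Fin (m+1), Hs (w i.succ) :=
            Finset.sum_nonneg fun i _ => hHspos _
          linarith
        rw [hS]
        linarith
lemma memX_of_memX_succ {Λ : Set ℂ} {ω : ℂ → ℂ} (hΛ : Λ ⊆ unitDisk)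
    {m : ℕ} (h : MemX (m+1) Λ ω) : MemX m Λ ω := by
  rcases Set.finite_or_infinite Λ with hfin | hinf
  · exact memX_of_finite hfin m
  obtain ⟨H, hH, C, hC⟩ := h
  set pool : ℕ → ℂ := fun n => ((Set.Infinite.natEmbedding Λ hinf) n : ℂ) with hpooldef
  have hpoolinj : Function.Injective pool := fun a b hab =>
    (Set.Infinite.natEmbedding Λ hinf).injective (Subtype.ext hab)
  have hpoolΛ : ∀ n, pool n ∈ Λ := fun n => ((Set.Infinite.natEmbedding Λ hinf) n).2
  set poolF : Finset ℂ := (Finset.range (2*m+2)).image pool with hpoolF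
  have hpoolFΛ : ∀ x ∈ poolF, x ∈ Λ := by
    intro x hx
    obtain ⟨n, _, rfl⟩ := Finset.mem_image.1 hx
    exact hpoolΛ n
  have hpoolFcard : poolF.card = 2*m+2 := by
    rw [hpoolF, Finset.card_image_of_injective _ hpoolinj, Finset.card_range]
  set K : ℝ := ∑ x ∈ poolF, H x with hK
  set M : ℝ := ∑ g : Fin (m+1) → Fin (2*m+2),
    ‖divDiff m ω (fun i => pool (g i))‖ with hM
  have hM0 : 0 ≤ M := Finset.sum_nonneg fun g _ => norm_nonneg _
  refine ⟨H, hH, (m+1) * C * Real.exp K + M, ?_⟩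
  intro z hzΛ hzinj
  rw [mul_exp_neg_le_iff]
  -- choose fresh points ξ
  set zF : Finset ℂ := Finset.univ.image z with hzF
  have hzFcard : zF.card ≤ m+1 := by
    refine (Finset.card_image_le).trans ?_
    simp
  have hGoodcard : m+1 ≤ (poolF \ zF).card := by
    have := Finset.le_card_sdiff zF poolF
    omega
  obtain ⟨S, hSsub, hScard⟩ := Finset.exists_subset_card_eq hGoodcard
  set ξ : Fin (m+1) → ℂ := fun i => (((Finset.equivFinOfCardEq hScard).symm i : S) : ℂ) with hξdef
  have hξinj : Function.Injective ξ := fun a b hab =>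
    (Finset.equivFinOfCardEq hScard).symm.injective (Subtype.ext hab)
  have hξS : ∀ i, ξ i ∈ S := fun i => ((Finset.equivFinOfCardEq hScard).symm i).2
  have hξpool : ∀ i, ξ i ∈ poolF := fun i => (Finset.mem_sdiff.1 (hSsub (hξS i))).1
  have hξz : ∀ i, ξ i ∉ Set.range z := by
    intro i ⟨j, hj⟩
    have : ξ i ∈ zF := by
      rw [hzF, ← hj]
      exact Finset.mem_image_of_mem z (Finset.mem_univ j)
    exact (Finset.mem_sdiff.1 (hSsub (hξS i))).2 this
  have hξΛ : ∀ i, ξ i ∈ Λ := fun i => hpoolFΛ _ (hξpool i)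
  -- ℕ-indexed fresh points
  set ξ' : ℕ → ℂ := fun k => ξ ⟨k % (m+1), Nat.mod_lt _ (Nat.succ_pos m)⟩ with hξ'def
  have hξ'eq : ∀ k (hk : k ≤ m), ξ' k = ξ ⟨k, Nat.lt_succ_of_le hk⟩ := by
    intro k hk
    simp only [hξ'def]
    congr 1
    exact Fin.ext (Nat.mod_eq_of_lt (Nat.lt_succ_of_le hk))
  have hξ'inj : ∀ j k, j ≤ m → k ≤ m → ξ' j = ξ' k → j = k := by
    intro j k hj hk hjk
    rw [hξ'eq j hj, hξ'eq k hk] at hjk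
    have h2 := congrArg Fin.val (hξinj hjk)
    simpa using h2
  have hξ'pool : ∀ k, ξ' k ∈ poolF := fun k => hξpool _
  have hξ'Λ : ∀ k, ξ' k ∈ Λ := fun k => hξΛ _
  have hξ'z : ∀ k, ξ' k ∉ Set.range z := fun k => hξz _
  -- the chain of tuples
  set t : ℕ → Fin (m+1) → ℂ :=
    fun k => Nat.rec z (fun k tk => Fin.cons (ξ' k) (tk ∘ Fin.castSucc)) k with htdef
  have ht0 : t 0 = z := rfl
  have htsucc : ∀ k, t (k+1) = Fin.cons (ξ' k) (t k ∘ Fin.castSucc) := fun k => rfl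
  -- the invariant
  have hinv : ∀ k, k ≤ m+1 → Function.Injective (t k) ∧
      ∀ i : Fin (m+1), ((i : ℕ) < k → ∃ j, j < k ∧ t k i = ξ' j) ∧
        (k ≤ (i:ℕ) → t k i ∈ Set.range z) := by
    intro k
    induction k with
    | zero =>
      exact fun _ => ⟨hzinj, fun i =>
        ⟨fun h => absurd h (Nat.not_lt_zero _), fun _ => ⟨i, rfl⟩⟩⟩
    | succ k ih =>
      intro hk
      obtain ⟨hinj, hpos⟩ := ih (Nat.le_of_succ_le hk)
      have hkm : k ≤ m := Nat.lt_succ_iff.1 hk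
      have hnotin : ξ' k ∉ Set.range (t k) := by
        rintro ⟨i, hi⟩
        rcases Nat.lt_or_ge (i : ℕ) k with hik | hik
        · obtain ⟨j, hj, hji⟩ := (hpos i).1 hik
          have : j = k := hξ'inj j k (le_trans (Nat.le_of_lt hj) hkm) hkm (hji ▸ hi)
          omega
        · exact (hξ'z k) (hi ▸ (hpos i).2 hik)
      constructor
      · rw [htsucc k]
        rw [Fin.cons_injective_iff]
        refine ⟨?_, hinj.comp (Fin.castSucc_injective _)⟩
        intro hmem
        exact hnotin (Set.range_comp_subset_range Fin.castSucc (t k) hmem)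
      · intro i
        refine Fin.cases ?_ (fun i₀ => ?_) i
        · constructor
          · intro _
            exact ⟨k, Nat.lt_succ_self k, by rw [htsucc k]; simp⟩
          · intro hcontra
            exact absurd hcontra (by simp)
        · have hval : ((i₀.succ : Fin (m+1)) : ℕ) = (i₀ : ℕ) + 1 := rfl
          have heq : t (k+1) i₀.succ = t k i₀.castSucc := by rw [htsucc k]; simp
          constructor
          · intro hlt
            have : (i₀ : ℕ) < k := by omega
            obtain ⟨j, hj, hji⟩ := (hpos i₀.castSucc).1 (by simpa using this)
            exact ⟨j, by omega, heq ▸ hji⟩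
          · intro hge
            have : k ≤ ((i₀.castSucc : Fin (m+1)) : ℕ) := by
              simp only [Fin.coe_castSucc]
              omega
            exact heq ▸ (hpos i₀.castSucc).2 this
  have htΛ : ∀ k, k ≤ m+1 → ∀ i, t k i ∈ Λ := by
    intro k hk i
    rcases Nat.lt_or_ge (i:ℕ) k with hik | hik
    · obtain ⟨j, _, hji⟩ := ((hinv k hk).2 i).1 hik
      exact hji ▸ hξ'Λ j
    · obtain ⟨j, hj⟩ := ((hinv k hk).2 i).2 hik
      exact hj ▸ hzΛ j
  have htP : ∀ k, k ≤ m+1 → ∀ i, t k i ∈ poolF ∪ zF := by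
    intro k hk i
    rcases Nat.lt_or_ge (i:ℕ) k with hik | hik
    · obtain ⟨j, _, hji⟩ := ((hinv k hk).2 i).1 hik
      exact Finset.mem_union_left _ (hji ▸ hξ'pool j)
    · obtain ⟨j, hj⟩ := ((hinv k hk).2 i).2 hik
      refine Finset.mem_union_right _ ?_
      rw [hzF, ← hj]
      exact Finset.mem_image_of_mem z (Finset.mem_univ j)
  have hnotin : ∀ k, k ≤ m → ξ' k ∉ Set.range (t k) := by
    intro k hkm
    obtain ⟨hinj, hpos⟩ := hinv k (le_trans hkm (Nat.le_succ m))
    rintro ⟨i, hi⟩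
    rcases Nat.lt_or_ge (i : ℕ) k with hik | hik
    · obtain ⟨j, hj, hji⟩ := (hpos i).1 hik
      have : j = k := hξ'inj j k (by omega) hkm (hji ▸ hi)
      omega
    · exact (hξ'z k) (hi ▸ (hpos i).2 hik)
  -- the chain estimate
  have hchain : ∀ k, k ≤ m+1 →
      ‖divDiff m ω z‖ ≤
        (∑ j ∈ Finset.range k,
          ‖divDiff (m+1) ω (Fin.cons (ξ' j) (t j))‖) +
          ‖divDiff m ω (t k)‖ := by
    intro k
    induction k with
    | zero => intro _; simp [ht0]
    | succ k ih =>
      intro hk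
      have hkm : k ≤ m := Nat.lt_succ_iff.1 hk
      have h1 := ih (by omega)
      have hstep := divDiff_step (ω := ω) (v := t k) (ξ := ξ' k)
        (fun i => hΛ (htΛ k (by omega) i)) (hΛ (hξ'Λ k))
        (fun hcontra => hnotin k hkm ⟨Fin.last m, hcontra.symm⟩)
      rw [Finset.sum_range_succ]
      rw [htsucc k]
      linarith
  have hmain := hchain (m+1) le_rfl
  -- nonnegativity facts
  have hHz : ∀ i, 0 ≤ H (z i) := fun i => hH.2 _ (hΛ (hzΛ i))
  have hHP : ∀ x ∈ poolF ∪ zF, 0 ≤ H x := by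
    intro x hx
    rcases Finset.mem_union.1 hx with hx | hx
    · exact hH.2 _ (hΛ (hpoolFΛ x hx))
    · obtain ⟨i, _, rfl⟩ := Finset.mem_image.1 hx
      exact hHz i
  set Sz : ℝ := ∑ i, H (z i) with hSz
  have hSz0 : 0 ≤ Sz := Finset.sum_nonneg fun i _ => hHz i
  -- sum over union bound
  have hPsum : ∑ x ∈ poolF ∪ zF, H x ≤ K + Sz := by
    have hu : poolF ∪ zF = poolF ∪ (zF \ poolF) := (Finset.union_sdiff_self_eq_union).symm
    rw [hu, Finset.sum_union Finset.disjoint_sdiff]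
    have h2 : ∑ x ∈ zF \ poolF, H x ≤ ∑ x ∈ zF, H x := by
      refine Finset.sum_le_sum_of_subset_of_nonneg (Finset.sdiff_subset) ?_
      intro x hx _
      obtain ⟨i, _, rfl⟩ := Finset.mem_image.1 hx
      exact hHz i
    have h3 : ∑ x ∈ zF, H x = Sz := by
      rw [hzF, hSz]
      exact Finset.sum_image (fun x _ y _ h => hzinj h)
    rw [hK]
    linarith
  -- C ≥ 0
  have hw0 : ∀ j, j ≤ m → (∀ i, (Fin.cons (ξ' j) (t j) : Fin (m+2) → ℂ) i ∈ Λ) ∧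
      Function.Injective (Fin.cons (ξ' j) (t j) : Fin (m+2) → ℂ) := by
    intro j hj
    constructor
    · intro i
      refine Fin.cases ?_ (fun i₀ => ?_) i
      · simpa using hξ'Λ j
      · simpa using htΛ j (by omega) i₀
    · rw [Fin.cons_injective_iff]
      exact ⟨hnotin j hj, (hinv j (by omega)).1⟩
  have hC0 : 0 ≤ C := le_trans (by positivity)
    (hC (Fin.cons (ξ' 0) (t 0)) (hw0 0 (Nat.zero_le m)).1 (hw0 0 (Nat.zero_le m)).2)
  -- per-term bound
  have hterm : ∀ j ∈ Finset.range (m+1),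
      ‖divDiff (m+1) ω (Fin.cons (ξ' j) (t j))‖
        ≤ C * Real.exp K * Real.exp Sz := by
    intro j hjmem
    have hj : j ≤ m := by
      have := Finset.mem_range.1 hjmem
      omega
    have hbound := hC (Fin.cons (ξ' j) (t j)) (hw0 j hj).1 (hw0 j hj).2
    rw [mul_exp_neg_le_iff] at hbound
    refine hbound.trans ?_
    rw [mul_assoc, ← Real.exp_add]
    refine mul_le_mul_of_nonneg_left (Real.exp_le_exp.2 ?_) hC0
    refine le_trans (sum_tuple_le (hw0 j hj).2 (P := poolF ∪ zF) ?_ hHP) hPsum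
    intro i
    refine Fin.cases ?_ (fun i₀ => ?_) i
    · simpa using Finset.mem_union_left _ (hξ'pool j)
    · simpa using htP j (by omega) i₀
  -- final term bound
  have hfinalpool : ∀ i, t (m+1) i ∈ poolF := by
    intro i
    obtain ⟨j, _, hji⟩ := ((hinv (m+1) le_rfl).2 i).1 i.isLt
    exact hji ▸ hξ'pool j
  have hfinal : ‖divDiff m ω (t (m+1))‖ ≤ M := by
    have hex : ∀ i : Fin (m+1), ∃ nn : Fin (2*m+2), pool (nn : ℕ) = t (m+1) i := by
      intro i
      obtain ⟨n, hn, hpn⟩ := Finset.mem_image.1 (hfinalpool i)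
      exact ⟨⟨n, Finset.mem_range.1 hn⟩, hpn⟩
    choose g hg using hex
    have hgf : (fun i => pool ((g i : Fin (2*m+2)) : ℕ)) = t (m+1) := funext hg
    rw [hM, ← hgf]
    exact Finset.single_le_sum (f := fun g : Fin (m+1) → Fin (2*m+2) =>
      ‖divDiff m ω (fun i => pool ((g i : Fin (2*m+2)) : ℕ))‖)
      (fun _ _ => norm_nonneg _) (Finset.mem_univ g)
  -- put it together
  have hsum : (∑ j ∈ Finset.range (m+1),
      ‖divDiff (m+1) ω (Fin.cons (ξ' j) (t j))‖)
        ≤ (m+1) * (C * Real.exp K * Real.exp Sz) := by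
    refine le_trans (Finset.sum_le_sum hterm) ?_
    rw [Finset.sum_const, Finset.card_range, nsmul_eq_mul]
    exact le_of_eq (by push_cast; ring)
  have h1le : (1:ℝ) ≤ Real.exp Sz := Real.one_le_exp hSz0
  calc ‖divDiff m ω z‖
      ≤ (∑ j ∈ Finset.range (m+1),
          ‖divDiff (m+1) ω (Fin.cons (ξ' j) (t j))‖) +
          ‖divDiff m ω (t (m+1))‖ := hmain
    _ ≤ (m+1) * (C * Real.exp K * Real.exp Sz) + M := add_le_add hsum hfinal
    _ ≤ ((m+1) * C * Real.exp K + M) * Real.exp Sz := by nlinarith [Real.exp_pos K]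
/-- If `Λ` is weakly separated then `X^0(Λ) = X^n(Λ)` for all `n ≥ 0`. -/
theorem X_zero_eq_X_n_of_weaklySep
    (Λ : Set ℂ) (hΛ : DiscreteSeq Λ) (hsep : WeaklySep Λ) (n : ℕ) (ω : ℂ → ℂ) :
    MemX 0 Λ ω ↔ MemX n Λ ω := by
  have hsub : Λ ⊆ unitDisk := hΛ.1
  constructor
  · intro h0
    induction n with
    | zero => exact h0
    | succ n ih => exact memX_succ_of_memX hsub hsep ih
  · intro hn
    induction n with
    | zero => exact hn
    | succ n ih => exact ih (memX_of_memX_succ hsub hn)
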